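/- Let Ω' = { (r,θ) : R₁(θ) < r < R₂(θ), 0 < θ < π/2 } in polar coordinates, with 0 < inf R₁ and R₂ bounded. For x ∈ ℝ² \ {0} write T(x) = φ(x) x/|x| + ψ(x) x^⊥/|x| with T(x) ∈ Ω'. Then for every x in the unit quarter disk, |T(x) − x| − |T(x)| + |x| ≥ A |x| ψ(x)², where A = 1 / ((2 sup R₂ + 1)(2 sup R₂)). -/

import Mathlib

open MeasureTheory

/-- Rotation of a planar vector by `π/2`. -/
noncomputable def perp (x : EuclideanSpace ℝ (Fin 2)) : EuclideanSpace ℝ (Fin 2) :=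
  (WithLp.equiv 2 (Fin 2 → ℝ)).symm ![-(x 1), x 0]

lemma key_arith (M nx nT nd φ ψ : ℝ) (hM : 0 < M) (hnx : 0 < nx)
    (hnT : 0 < nT) (hTM : nT ≤ M)
    (h1 : φ^2 + ψ^2 = nT^2)
    (h2 : nd^2 = nT^2 - 2*φ*nx + nx^2)
    (h3 : nT - nx ≤ nd) (h4 : nd ≤ nT + nx) :
    1/((2*M+1)*(2*M)) * nx * ψ^2 ≤ nd - nT + nx := by
  rcases eq_or_ne ψ 0 with h | h
  · simp [h]; linarith
  · have hψ2 : 0 < ψ^2 := by positivity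
    have hφlt : φ < nT := by nlinarith
    have hφgt : -nT < φ := by nlinarith
    set N := nd - nT + nx with hN
    set D := nd + nT - nx with hD
    have hN0 : 0 ≤ N := by simp [hN]; linarith
    have hDle : D ≤ 2*M + 1 := by simp [hD]; linarith
    have hTφ : ψ^2 ≤ (nT - φ) * (2*M) := by nlinarith
    have hND : N * D = 2*nx*(nT-φ) := by
      simp only [hN, hD]; linear_combination h2
    have hC : (0:ℝ) < (2*M+1)*(2*M) := by positivity
    rw [div_mul_eq_mul_div, one_mul, div_mul_eq_mul_div, div_le_iff₀ hC]
    have e1 : 2*nx*ψ^2 ≤ 2*nx*((nT-φ)*(2*M)) := by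
      have := mul_le_mul_of_nonneg_left hTφ (by positivity : (0:ℝ) ≤ 2*nx)
      linarith
    have e2 : 2*nx*(nT-φ)*(2*M) = (N*D)*(2*M) := by rw [hND]
    have e3 : N*D*(2*M) ≤ N*((2*M+1)*(2*M)) := by
      nlinarith [mul_nonneg (mul_nonneg hN0 (by linarith : (0:ℝ) ≤ 2*M+1-D)) (by linarith : (0:ℝ) ≤ 2*M)]
    nlinarith [mul_pos hnx hψ2]

theorem stmt7 (M : ℝ) (hM : 0 < M)
    (x Tx : EuclideanSpace ℝ (Fin 2)) (hx : x ≠ 0) (hx1 : ‖x‖ ≤ 1)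
    (hTx : ‖Tx‖ ≤ M) (hTx0 : Tx ≠ 0)
    (φ ψ : ℝ)
    (hφ : φ = inner ℝ Tx (‖x‖⁻¹ • x)) (hψ : ψ = inner ℝ Tx (‖x‖⁻¹ • perp x)) :
    (1 / ((2 * M + 1) * (2 * M))) * ‖x‖ * ψ ^ 2 ≤ ‖Tx - x‖ - ‖Tx‖ + ‖x‖ := by
  have hnx : 0 < ‖x‖ := norm_pos_iff.mpr hx
  have hnT : 0 < ‖Tx‖ := norm_pos_iff.mpr hTx0
  have hp0 : perp x 0 = -(x 1) := rfl
  have hp1 : perp x 1 = x 0 := rfl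
  have hix : (inner ℝ Tx x : ℝ) = Tx 0 * x 0 + Tx 1 * x 1 := by
    simp [PiLp.inner_apply, Fin.sum_univ_two, RCLike.inner_apply, mul_comm]
  have hip : (inner ℝ Tx (perp x) : ℝ) = Tx 0 * (-(x 1)) + Tx 1 * x 0 := by
    simp [PiLp.inner_apply, Fin.sum_univ_two, RCLike.inner_apply, hp0, hp1, mul_comm]
  have hnx2 : ‖x‖^2 = x 0 ^2 + x 1 ^2 := by
    rw [← real_inner_self_eq_norm_sq]
    simp only [PiLp.inner_apply, Fin.sum_univ_two, RCLike.inner_apply, conj_trivial]; ring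
  have hnT2 : ‖Tx‖^2 = Tx 0 ^2 + Tx 1 ^2 := by
    rw [← real_inner_self_eq_norm_sq]
    simp only [PiLp.inner_apply, Fin.sum_univ_two, RCLike.inner_apply, conj_trivial]; ring
  have hφ' : φ * ‖x‖ = Tx 0 * x 0 + Tx 1 * x 1 := by
    rw [hφ, real_inner_smul_right, hix]
    field_simp
  have hψ' : ψ * ‖x‖ = Tx 0 * (-(x 1)) + Tx 1 * x 0 := by
    rw [hψ, real_inner_smul_right, hip]
    field_simp
  have h1 : φ^2 + ψ^2 = ‖Tx‖^2 := by
    have key : (φ * ‖x‖)^2 + (ψ * ‖x‖)^2 = ‖Tx‖^2 * ‖x‖^2 := by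
      rw [hφ', hψ', hnT2, hnx2]; ring
    have hx2 : (0:ℝ) < ‖x‖^2 := by positivity
    field_simp at key
    nlinarith
  have h2 : ‖Tx - x‖^2 = ‖Tx‖^2 - 2*φ*‖x‖ + ‖x‖^2 := by
    rw [norm_sub_sq_real]
    have : (inner ℝ Tx x : ℝ) = φ * ‖x‖ := by rw [hφ', hix]
    rw [this]; ring
  have h3 : ‖Tx‖ - ‖x‖ ≤ ‖Tx - x‖ := by
    have := norm_sub_norm_le Tx x
    linarith [abs_le.mp (abs_norm_sub_norm_le Tx x)]
  have h4 : ‖Tx - x‖ ≤ ‖Tx‖ + ‖x‖ := norm_sub_le Tx x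
  exact key_arith M ‖x‖ ‖Tx‖ ‖Tx - x‖ φ ψ hM hnx hnT hTx h1 h2 h3 h4
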